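/- Let K be a field, x = (x_1,…,x_n) variables, and f = (f_1,…,f_n) polynomials in K[x]. For every e ≥ 0 there exists d_0 ≥ 0 such that for all d ≥ d_0 the equality of K-subspaces (f)^{≤d}_x ∩ K[x^{≤e}] = (f)_x ∩ K[x^{≤e}] holds, where (f)_x is the ideal generated by f_1,…,f_n. -/

import Mathlib

/-- `(f)^{≤d}_x` : the `K`-subspace of `K[x]` spanned by the products `f i * g` with
`totalDegree (f i) + totalDegree g ≤ d`. -/
noncomputable def boundedIdealSpan {K : Type*} [Field K] {n s : ℕ}
    (f : Fin s → MvPolynomial (Fin n) K) (d : ℕ) : Submodule K (MvPolynomial (Fin n) K) :=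
  Submodule.span K
    {p | ∃ (i : Fin s) (g : MvPolynomial (Fin n) K),
      (f i).totalDegree + g.totalDegree ≤ d ∧ p = f i * g}

lemma boundedIdealSpan_mono {K : Type*} [Field K] {n s : ℕ}
    (f : Fin s → MvPolynomial (Fin n) K) {d d' : ℕ} (h : d ≤ d') :
    boundedIdealSpan f d ≤ boundedIdealSpan f d' := by
  apply Submodule.span_mono
  rintro p ⟨i, g, hle, rfl⟩
  exact ⟨i, g, hle.trans h, rfl⟩

lemma boundedIdealSpan_le_ideal {K : Type*} [Field K] {n s : ℕ}
    (f : Fin s → MvPolynomial (Fin n) K) (d : ℕ) :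
    boundedIdealSpan f d ≤ (Ideal.span (Set.range f)).restrictScalars K := by
  rw [boundedIdealSpan, Submodule.span_le]
  rintro p ⟨i, g, -, rfl⟩
  exact Ideal.mul_mem_right g _ (Ideal.subset_span (Set.mem_range_self i))

lemma exists_mem_boundedIdealSpan {K : Type*} [Field K] {n s : ℕ}
    (f : Fin s → MvPolynomial (Fin n) K) {x : MvPolynomial (Fin n) K}
    (hx : x ∈ Ideal.span (Set.range f)) :
    ∃ D, x ∈ boundedIdealSpan f D := by
  rw [Ideal.span, Submodule.mem_span_range_iff_exists_fun] at hx
  obtain ⟨c, rfl⟩ := hx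
  refine ⟨Finset.univ.sup (fun i => (f i).totalDegree + (c i).totalDegree), ?_⟩
  apply Submodule.sum_mem
  intro i _
  apply Submodule.subset_span
  exact ⟨i, c i, Finset.le_sup (f := fun i => (f i).totalDegree + (c i).totalDegree) (Finset.mem_univ i), (smul_eq_mul _ _).trans (mul_comm _ _)⟩

/-- For every `e ≥ 0` there exists `d₀` such that for all `d ≥ d₀`,
`(f)^{≤d}_x ∩ K[x^{≤e}] = (f)_x ∩ K[x^{≤e}]` as `K`-subspaces of `K[x]`. -/
theorem boundedIdealSpan_inter_stabilizes
    (K : Type*) [Field K] (n : ℕ) (f : Fin n → MvPolynomial (Fin n) K) (e : ℕ) :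
    ∃ d₀ : ℕ, ∀ d ≥ d₀,
      boundedIdealSpan f d ⊓ MvPolynomial.restrictTotalDegree (Fin n) K e =
        (Ideal.span (Set.range f)).restrictScalars K ⊓
          MvPolynomial.restrictTotalDegree (Fin n) K e := by
  set V := MvPolynomial.restrictTotalDegree (Fin n) K e
  have hNoeth : IsNoetherian K V := inferInstance
  set T : ℕ →o Submodule K V :=
    ⟨fun d => Submodule.comap V.subtype (boundedIdealSpan f d),
      fun d d' h => Submodule.comap_mono (boundedIdealSpan_mono f h)⟩
  obtain ⟨d₀, hd₀⟩ := monotone_stabilizes_iff_noetherian.mpr hNoeth T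
  refine ⟨d₀, fun d hd => ?_⟩
  apply le_antisymm
  · exact inf_le_inf_right _ (boundedIdealSpan_le_ideal f d)
  · rintro x ⟨hxI, hxV⟩
    obtain ⟨D, hD⟩ := exists_mem_boundedIdealSpan f hxI
    have hmem : (⟨x, hxV⟩ : V) ∈ T (max D d) :=
      boundedIdealSpan_mono f (le_max_left D d) hD
    rw [← hd₀ (max D d) (hd.trans (le_max_right D d)), hd₀ d hd] at hmem
    exact ⟨hmem, hxV⟩
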